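/- Suppose the hierarchical code is formed by concatenating an outer [[n, ρn, Θ(n^δ)]] LDPC code with an inner surface code of linear size ℓ = Θ(log n), so that N = Θ(n·log²n). Then the number of encoded qubits satisfies K = Ω(N / log²N) and the distance satisfies D = Ω(N^δ / log^{2δ−1}(N/log N)), for δ ≥ 1/2. -/

import Mathlib

open Filter

/-- If the hierarchical code is formed by concatenating an outer
`[[n, ρn, Θ(n^δ)]]` LDPC code with an inner surface code of linear size `ℓ = Θ(log n)`,
so that `N = n·ℓ²`, `K = ρn`, `D = d·ℓ`, then `K = Ω(N / log²N)` and
`D = Ω(N^δ / log^{2δ−1}(N / log N))`, for `1/2 ≤ δ ≤ 1`. -/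
theorem stmt_11 (ρ δ : ℝ) (hρ : 0 < ρ) (hδ : 1 / 2 ≤ δ) (hδ1 : δ ≤ 1)
    (n d ℓ N K D : ℕ → ℝ)
    (hn : Tendsto n atTop atTop)
    (hK : ∀ t, K t = ρ * n t)
    (hd : ∃ c₁ c₂ : ℝ, 0 < c₁ ∧ ∀ᶠ t in atTop, c₁ * n t ^ δ ≤ d t ∧ d t ≤ c₂ * n t ^ δ)
    (hl : ∃ c₁ c₂ : ℝ, 0 < c₁ ∧
      ∀ᶠ t in atTop, c₁ * Real.log (n t) ≤ ℓ t ∧ ℓ t ≤ c₂ * Real.log (n t))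
    (hN : ∀ t, N t = n t * ℓ t ^ 2)
    (hD : ∀ t, D t = d t * ℓ t) :
    (∃ c : ℝ, 0 < c ∧ ∀ᶠ t in atTop, c * (N t / Real.log (N t) ^ 2) ≤ K t) ∧
    (∃ c : ℝ, 0 < c ∧ ∀ᶠ t in atTop,
      c * (N t ^ δ / Real.log (N t / Real.log (N t)) ^ (2 * δ - 1)) ≤ D t) := by
  obtain ⟨c₁, c₂, hc₁, hdE⟩ := hd
  obtain ⟨a₁, a₂, ha₁, hlE⟩ := hl
  set b₂ := max a₂ 1 with hb₂def
  have hb₂1 : (1:ℝ) ≤ b₂ := le_max_right _ _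
  have hb₂0 : (0:ℝ) < b₂ := lt_of_lt_of_le one_pos hb₂1
  have hB0 : (0:ℝ) < b₂ ^ (2*δ) := Real.rpow_pos_of_pos hb₂0 _
  have hlogx : ∀ᶠ x : ℝ in atTop, b₂ * Real.log x ≤ x := by
    have h := Real.isLittleO_log_id_atTop.bound (show (0:ℝ) < 1/b₂ by positivity)
    filter_upwards [h, eventually_ge_atTop (0:ℝ)] with x hx hx0
    simp only [Real.norm_eq_abs, id] at hx
    rw [abs_of_nonneg hx0] at hx
    have h' : Real.log x ≤ 1/b₂ * x := le_trans (le_abs_self _) hx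
    calc b₂ * Real.log x ≤ b₂ * (1/b₂ * x) := mul_le_mul_of_nonneg_left h' hb₂0.le
      _ = x := by field_simp
  have hLbig := (Real.tendsto_log_atTop.comp hn).eventually_ge_atTop
      (max 1 (max (1/a₁) (3/(a₁^2))))
  have key : ∀ᶠ t in atTop,
      (ρ / b₂^2) * (N t / Real.log (N t) ^ 2) ≤ K t ∧
      (c₁ * a₁ / b₂ ^ (2*δ)) *
        (N t ^ δ / Real.log (N t / Real.log (N t)) ^ (2 * δ - 1)) ≤ D t := by
    filter_upwards [hdE, hlE, hLbig, hn.eventually_ge_atTop 1, hn.eventually hlogx]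
      with t hdt hlt hLb hx1 hxl
    set x := n t with hx
    set L := Real.log x with hLdef
    have hL1 : (1:ℝ) ≤ L := le_trans (le_max_left _ _) hLb
    have hLa : 1/a₁ ≤ L := le_trans (le_trans (le_max_left _ _) (le_max_right _ _)) hLb
    have hL3 : 3/(a₁^2) ≤ L := le_trans (le_trans (le_max_right _ _) (le_max_right _ _)) hLb
    have hL0 : (0:ℝ) < L := lt_of_lt_of_le one_pos hL1
    have hx0 : (0:ℝ) < x := lt_of_lt_of_le one_pos hx1
    have hl1 : (1:ℝ) ≤ ℓ t := by
      have h' : a₁ * (1/a₁) ≤ a₁ * L := mul_le_mul_of_nonneg_left hLa ha₁.le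
      rw [mul_one_div, div_self ha₁.ne'] at h'
      exact le_trans h' hlt.1
    have hl0 : (0:ℝ) < ℓ t := lt_of_lt_of_le one_pos hl1
    have hlb : ℓ t ≤ b₂ * L :=
      le_trans hlt.2 (mul_le_mul_of_nonneg_right (le_max_left _ _) hL0.le)
    have hNt : N t = x * ℓ t ^ 2 := hN t
    have hN0 : (0:ℝ) < N t := by rw [hNt]; positivity
    have hl2 : (1:ℝ) ≤ ℓ t ^ 2 := by nlinarith [hl1]
    have hxN : x ≤ N t := by rw [hNt]; exact le_mul_of_one_le_right hx0.le hl2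
    have hLlogN : L ≤ Real.log (N t) := Real.log_le_log hx0 hxN
    have hlogN0 : (0:ℝ) < Real.log (N t) := lt_of_lt_of_le hL0 hLlogN
    constructor
    · -- first goal
      rw [hK t]
      have h1 : N t / Real.log (N t) ^ 2 ≤ x * b₂^2 := by
        calc N t / Real.log (N t) ^ 2 ≤ N t / L ^ 2 := by
              apply div_le_div_of_nonneg_left hN0.le (by positivity)
              exact pow_le_pow_left₀ hL0.le hLlogN 2
          _ ≤ x * b₂^2 := by
              rw [div_le_iff₀ (by positivity), hNt]
              have h2 : ℓ t ^ 2 ≤ (b₂*L)^2 := pow_le_pow_left₀ hl0.le hlb 2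
              calc x * ℓ t ^ 2 ≤ x * (b₂*L)^2 := mul_le_mul_of_nonneg_left h2 hx0.le
                _ = x * b₂^2 * L^2 := by ring
      calc (ρ / b₂^2) * (N t / Real.log (N t) ^ 2) ≤ (ρ / b₂^2) * (x * b₂^2) :=
            mul_le_mul_of_nonneg_left h1 (by positivity)
        _ = ρ * x := by field_simp
    · -- second goal
      set P := Real.log (N t / Real.log (N t)) with hPdef
      have hloglN : Real.log (N t) ≤ 3 * L := by
        have hlx : ℓ t ≤ x := le_trans hlb hxl
        have h2 : Real.log (ℓ t) ≤ L := Real.log_le_log hl0 hlx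
        rw [hNt, Real.log_mul hx0.ne' (by positivity), Real.log_pow]
        push_cast
        linarith
      have hxNlog : x ≤ N t / Real.log (N t) := by
        rw [le_div_iff₀ hlogN0]
        have h3 : a₁^2 * L^2 ≤ ℓ t ^ 2 := by
          have h3' := pow_le_pow_left₀ (by positivity : (0:ℝ) ≤ a₁ * L) hlt.1 2
          calc a₁^2 * L^2 = (a₁*L)^2 := by ring
            _ ≤ _ := h3'
        have h4 : 3 * L ≤ a₁^2 * L^2 := by
          have h5 : (3/(a₁^2)) * a₁^2 ≤ L * a₁^2 :=
            mul_le_mul_of_nonneg_right hL3 (by positivity)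
          rw [div_mul_cancel₀ _ (by positivity : (a₁:ℝ)^2 ≠ 0)] at h5
          calc 3 * L ≤ (L * a₁^2) * L := mul_le_mul_of_nonneg_right h5 hL0.le
            _ = a₁^2 * L^2 := by ring
        calc x * Real.log (N t) ≤ x * (3 * L) :=
              mul_le_mul_of_nonneg_left hloglN hx0.le
          _ ≤ x * (a₁^2 * L^2) := mul_le_mul_of_nonneg_left h4 hx0.le
          _ ≤ x * ℓ t ^ 2 := mul_le_mul_of_nonneg_left h3 hx0.le
          _ = N t := hNt.symm
      have hLP : L ≤ P := Real.log_le_log hx0 hxNlog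
      have hP0 : (0:ℝ) < P := lt_of_lt_of_le hL0 hLP
      have he0 : (0:ℝ) ≤ 2*δ - 1 := by linarith
      have hPe : L ^ (2*δ-1) ≤ P ^ (2*δ-1) := Real.rpow_le_rpow hL0.le hLP he0
      have hLe0 : (0:ℝ) < L ^ (2*δ-1) := Real.rpow_pos_of_pos hL0 _
      have hNd : N t ^ δ ≤ x ^ δ * (b₂ ^ (2*δ) * L ^ (2*δ)) := by
        have hN' : N t ≤ x * (b₂ * L)^2 := by
          rw [hNt]
          have h2 : ℓ t ^ 2 ≤ (b₂*L)^2 := pow_le_pow_left₀ hl0.le hlb 2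
          exact mul_le_mul_of_nonneg_left h2 hx0.le
        calc N t ^ δ ≤ (x * (b₂*L)^2) ^ δ :=
              Real.rpow_le_rpow hN0.le hN' (by linarith)
          _ = x ^ δ * (b₂ ^ (2*δ) * L ^ (2*δ)) := by
              rw [Real.mul_rpow hx0.le (by positivity),
                ← Real.rpow_natCast (b₂*L) 2, ← Real.rpow_mul (by positivity)]
              push_cast
              rw [Real.mul_rpow hb₂0.le hL0.le]
      have hdiv : N t ^ δ / P ^ (2*δ-1) ≤ x ^ δ * b₂ ^ (2*δ) * L := by
        calc N t ^ δ / P ^ (2*δ-1) ≤ N t ^ δ / L ^ (2*δ-1) :=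
              div_le_div_of_nonneg_left (Real.rpow_nonneg hN0.le _) hLe0 hPe
          _ ≤ (x ^ δ * (b₂ ^ (2*δ) * L ^ (2*δ))) / L ^ (2*δ-1) := by gcongr
          _ = x ^ δ * b₂ ^ (2*δ) * L := by
              rw [mul_div_assoc, mul_div_assoc, ← Real.rpow_sub hL0]
              ring_nf
              rw [Real.rpow_one]
      rw [hD t]
      calc (c₁ * a₁ / b₂ ^ (2*δ)) * (N t ^ δ / P ^ (2*δ-1))
            ≤ (c₁ * a₁ / b₂ ^ (2*δ)) * (x ^ δ * b₂ ^ (2*δ) * L) :=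
            mul_le_mul_of_nonneg_left hdiv (by positivity)
        _ = (c₁ * x ^ δ) * (a₁ * L) := by field_simp
        _ ≤ d t * ℓ t :=
            mul_le_mul hdt.1 hlt.1 (by positivity)
              (le_trans (by positivity) hdt.1)
  refine ⟨⟨ρ / b₂^2, by positivity, key.mono fun t h => h.1⟩,
    ⟨c₁ * a₁ / b₂ ^ (2*δ), div_pos (mul_pos hc₁ ha₁) hB0,
      key.mono fun t h => h.2⟩⟩
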